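/- Let p be a prime and G = ∏_{e≥1} C_{p^e}^{m_e} a finite abelian p-group. If k ≥ 0 is an integer with base-p expansion k = Σ_{i≥0} v_i·p^i (digits 0 ≤ v_i ≤ p−1, almost all zero), then τ(k) = Σ_{i≥0} v_i·p^i·c_{i+1}, where p^i·c_{i+1} = p^i·Σ_{e≥1} m_e − Σ_{e=1}^{i} m_e·p^{i−e} is a non-negative integer. -/

import Mathlib

noncomputable section

/-- The rationals `c_0 = 0` and `c_i = Σ_{e≥1} m_e − Σ_{e=1}^{i−1} m_e p^{−e}` for `i ≥ 1`
attached to the abelian `p`-group `G = ∏_{e≥1} C_{p^e}^{m_e}` (with `m_e = 0` for `e > t`). -/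
def cseq (p t : ℕ) (m : ℕ → ℕ) : ℕ → ℚ
  | 0 => 0
  | (i + 1) => (∑ e ∈ Finset.Icc 1 t, (m e : ℚ)) - ∑ e ∈ Finset.Icc 1 i, (m e : ℚ) / (p : ℚ) ^ e

/-- `τ(k) = Σ_{e ≥ 1} m_e (k − ⌊k/p^e⌋)`. -/
def tauf (p t : ℕ) (m : ℕ → ℕ) (k : ℕ) : ℕ :=
  ∑ e ∈ Finset.Icc 1 t, m e * (k - k / p ^ e)

lemma digit_sum_lt (p : ℕ) (hp : 2 ≤ p) (v : ℕ → ℕ) (hv : ∀ i, v i < p) (N : ℕ) :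
    ∑ i ∈ Finset.range N, v i * p ^ i < p ^ N := by
  induction N with
  | zero => simp
  | succ N ih =>
    rw [Finset.sum_range_succ, pow_succ]
    have h1 : v N ≤ p - 1 := by have := hv N; omega
    have h2 : v N * p ^ N ≤ (p - 1) * p ^ N := Nat.mul_le_mul_right _ h1
    have h3 : p ^ N + (p - 1) * p ^ N = p ^ N * p := by
      have h4 : p ^ N + (p - 1) * p ^ N = (1 + (p - 1)) * p ^ N := by ring
      have h5 : 1 + (p - 1) = p := by omega
      rw [h4, h5, Nat.mul_comm]
    omega

lemma digit_sum_div (p : ℕ) (hp : 2 ≤ p) (v : ℕ → ℕ) (hv : ∀ i, v i < p) (N e : ℕ) :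
    (∑ i ∈ Finset.range N, v i * p ^ i) / p ^ e
      = ∑ i ∈ Finset.range N, v i * (p ^ i / p ^ e) := by
  rcases le_or_gt N e with h | h
  · rw [Nat.div_eq_of_lt
      (lt_of_lt_of_le (digit_sum_lt p hp v hv N) (Nat.pow_le_pow_right (by omega) h))]
    symm
    apply Finset.sum_eq_zero
    intro i hi
    have hi' : i < e := lt_of_lt_of_le (Finset.mem_range.mp hi) h
    rw [Nat.div_eq_of_lt (Nat.pow_lt_pow_right (by omega) hi')]
    simp
  · rw [Finset.range_eq_Ico, ← Finset.sum_Ico_consecutive _ (Nat.zero_le e) h.le,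
        ← Finset.sum_Ico_consecutive (fun i => v i * (p ^ i / p ^ e)) (Nat.zero_le e) h.le]
    have hA : ∑ i ∈ Finset.Ico 0 e, v i * p ^ i < p ^ e := by
      rw [← Finset.range_eq_Ico]; exact digit_sum_lt p hp v hv e
    have hsplit : ∑ i ∈ Finset.Ico e N, v i * p ^ i
        = p ^ e * ∑ i ∈ Finset.Ico e N, v i * p ^ (i - e) := by
      rw [Finset.mul_sum]
      apply Finset.sum_congr rfl
      intro i hi
      obtain ⟨hi1, _⟩ := Finset.mem_Ico.mp hi
      have hpe : p ^ i = p ^ e * p ^ (i - e) := by rw [← pow_add]; congr 1; omega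
      rw [hpe]; ring
    rw [hsplit, Nat.add_mul_div_left _ _ (pow_pos (by omega : 0 < p) e),
        Nat.div_eq_of_lt hA, Nat.zero_add]
    have h1 : ∑ i ∈ Finset.Ico 0 e, v i * (p ^ i / p ^ e) = 0 := by
      apply Finset.sum_eq_zero
      intro i hi
      obtain ⟨_, hi2⟩ := Finset.mem_Ico.mp hi
      rw [Nat.div_eq_of_lt (Nat.pow_lt_pow_right (by omega) hi2)]
      simp
    rw [h1, Nat.zero_add]
    apply Finset.sum_congr rfl
    intro i hi
    obtain ⟨hi1, _⟩ := Finset.mem_Ico.mp hi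
    rw [Nat.pow_div hi1 (by omega)]

/-- If `k = Σ_i v_i p^i` in base `p`, then
`τ(k) = Σ_i v_i · (p^i c_{i+1})`, the numbers `p^i c_{i+1}` being non-negative integers. -/
theorem stmt6
    (p t : ℕ) (hp : p.Prime)
    (m : ℕ → ℕ) (hm : ∀ e, t < e → m e = 0)
    -- the non-negative integers `E' i = p^i·c_{i+1}`
    (E' : ℕ → ℕ) (hE' : ∀ i, (E' i : ℚ) = (p : ℚ) ^ i * cseq p t m (i + 1))
    -- the base-`p` digits of `k`
    (k T : ℕ) (v : ℕ → ℕ) (hv : ∀ i, v i < p) (hv0 : ∀ i, T < i → v i = 0)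
    (hk : k = ∑ i ∈ Finset.range (T + 1), v i * p ^ i) :
    tauf p t m k = ∑ i ∈ Finset.range (T + 1), v i * E' i := by
  have hp2 : 2 ≤ p := hp.two_le
  have hpQ : (p : ℚ) ≠ 0 := Nat.cast_ne_zero.mpr (by omega)
  set N := T + 1 with hN
  have hsub : ∀ e, k - k / p ^ e = ∑ i ∈ Finset.range N, v i * (p ^ i - p ^ i / p ^ e) := by
    intro e
    have hdiv : k / p ^ e = ∑ i ∈ Finset.range N, v i * (p ^ i / p ^ e) := by
      rw [hk]; exact digit_sum_div p hp2 v hv N e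
    have hterm : ∀ i ∈ Finset.range N, v i * (p ^ i / p ^ e) ≤ v i * p ^ i :=
      fun i _ => Nat.mul_le_mul_left _ (Nat.div_le_self _ _)
    rw [hdiv, hk, ← Finset.sum_tsub_distrib _ hterm]
    apply Finset.sum_congr rfl
    intro i _
    rw [Nat.mul_sub]
  have hswap : tauf p t m k = ∑ i ∈ Finset.range N, v i *
      ∑ e ∈ Finset.Icc 1 t, m e * (p ^ i - p ^ i / p ^ e) := by
    unfold tauf
    simp only [hsub, Finset.mul_sum]
    rw [Finset.sum_comm]
    apply Finset.sum_congr rfl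
    intro i _
    apply Finset.sum_congr rfl
    intro e _
    ring
  rw [hswap]
  apply Finset.sum_congr rfl
  intro i _
  congr 1
  have key : ((∑ e ∈ Finset.Icc 1 t, m e * (p ^ i - p ^ i / p ^ e) : ℕ) : ℚ) = (E' i : ℚ) := by
    rw [hE' i]
    show _ = (p : ℚ) ^ i * ((∑ e ∈ Finset.Icc 1 t, (m e : ℚ))
      - ∑ e ∈ Finset.Icc 1 i, (m e : ℚ) / (p : ℚ) ^ e)
    rw [Nat.cast_sum]
    have hL : ∀ e ∈ Finset.Icc 1 t, ((m e * (p ^ i - p ^ i / p ^ e) : ℕ) : ℚ)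
        = (m e : ℚ) * ((p : ℚ) ^ i - ((p ^ i / p ^ e : ℕ) : ℚ)) := by
      intro e _
      rw [Nat.cast_mul, Nat.cast_sub (Nat.div_le_self _ _)]
      push_cast
      ring
    rw [Finset.sum_congr rfl hL]
    have hmain : ∑ e ∈ Finset.Icc 1 t, (m e : ℚ) * ((p ^ i / p ^ e : ℕ) : ℚ)
        = ∑ e ∈ Finset.Icc 1 i, (p : ℚ) ^ i * ((m e : ℚ) / (p : ℚ) ^ e) := by
      have hLs : ∑ e ∈ Finset.Icc 1 (min t i), (m e : ℚ) * ((p ^ i / p ^ e : ℕ) : ℚ)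
          = ∑ e ∈ Finset.Icc 1 t, (m e : ℚ) * ((p ^ i / p ^ e : ℕ) : ℚ) := by
        apply Finset.sum_subset (Finset.Icc_subset_Icc_right (min_le_left t i))
        intro e he hne
        obtain ⟨he1, he2⟩ := Finset.mem_Icc.mp he
        have hie : i < e := by
          by_contra hcon
          exact hne (Finset.mem_Icc.mpr ⟨he1, le_min he2 (by omega)⟩)
        rw [Nat.div_eq_of_lt (Nat.pow_lt_pow_right (by omega) hie)]
        simp
      have hRs : ∑ e ∈ Finset.Icc 1 (min t i), (p : ℚ) ^ i * ((m e : ℚ) / (p : ℚ) ^ e)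
          = ∑ e ∈ Finset.Icc 1 i, (p : ℚ) ^ i * ((m e : ℚ) / (p : ℚ) ^ e) := by
        apply Finset.sum_subset (Finset.Icc_subset_Icc_right (min_le_right t i))
        intro e he hne
        obtain ⟨he1, he2⟩ := Finset.mem_Icc.mp he
        have ht : t < e := by
          by_contra hcon
          exact hne (Finset.mem_Icc.mpr ⟨he1, le_min (by omega) he2⟩)
        rw [hm e ht]; simp
      rw [← hLs, ← hRs]
      apply Finset.sum_congr rfl
      intro e he
      obtain ⟨he1, he2⟩ := Finset.mem_Icc.mp he
      have hei : e ≤ i := le_trans he2 (min_le_right t i)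
      rw [Nat.pow_div hei (by omega)]
      have hpi : (p : ℚ) ^ i = (p : ℚ) ^ (i - e) * (p : ℚ) ^ e := by
        rw [← pow_add]; congr 1; omega
      rw [hpi]
      push_cast
      field_simp
    calc ∑ e ∈ Finset.Icc 1 t, (m e : ℚ) * ((p : ℚ) ^ i - ((p ^ i / p ^ e : ℕ) : ℚ))
        = (∑ e ∈ Finset.Icc 1 t, (m e : ℚ)) * (p : ℚ) ^ i
          - ∑ e ∈ Finset.Icc 1 t, (m e : ℚ) * ((p ^ i / p ^ e : ℕ) : ℚ) := by
          rw [Finset.sum_mul, ← Finset.sum_sub_distrib]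
          apply Finset.sum_congr rfl; intro e _; ring
      _ = (p : ℚ) ^ i * ((∑ e ∈ Finset.Icc 1 t, (m e : ℚ))
          - ∑ e ∈ Finset.Icc 1 i, (m e : ℚ) / (p : ℚ) ^ e) := by
          rw [hmain, mul_sub, Finset.mul_sum, Finset.mul_sum, Finset.sum_mul]
          congr 1
          apply Finset.sum_congr rfl; intro e _; ring
  exact Nat.cast_injective key
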